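/- There exists a constant c > 0 such that the formal power series θ(τ) = Σ_{n=0}^∞ c τⁿ/(n+1)³ and its formal derivative θ'(τ) satisfy θ'(τ)·θ'(τ) ≪ θ'(τ) coefficientwise. -/

import Mathlib

open PowerSeries

private lemma sum_inv_sq_le (n : ℕ) :
    ∑ i ∈ Finset.range n, (1:ℝ)/(i+2)^2 ≤ 1 - 1/((n:ℝ)+1) := by
  induction n with
  | zero => simp
  | succ m ih =>
    rw [Finset.sum_range_succ]
    have h1 : (0:ℝ) < (m:ℝ)+1 := by positivity
    have h2 : (0:ℝ) < (m:ℝ)+2 := by positivity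
    have key : (1:ℝ)/((m:ℝ)+2)^2 ≤ 1/((m:ℝ)+1) - 1/((m:ℝ)+2) := by
      rw [div_sub_div _ _ (ne_of_gt h1) (ne_of_gt h2), div_le_div_iff₀ (by positivity) (by positivity)]
      ring_nf
      nlinarith [sq_nonneg ((m:ℝ)+1)]
    push_cast
    have he : (m:ℝ)+1+1 = (m:ℝ)+2 := by ring
    rw [he]
    linarith

private lemma pair_bound (a b : ℝ) (ha : 1 ≤ a) (hb : 1 ≤ b) :
    ((a-1)/a^3)*((b-1)/b^3) ≤ 4/(a+b)^2 * (1/a^2 + 1/b^2) := by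
  have ha0 : 0 < a := by linarith
  have hb0 : 0 < b := by linarith
  have h1 : ((a-1)/a^3)*((b-1)/b^3) ≤ 1/(a^2*b^2) := by
    rw [div_mul_div_comm, div_le_div_iff₀ (by positivity) (by positivity)]
    nlinarith [mul_pos ha0 hb0, sq_nonneg (a*b)]
  have h2 : 1/(a^2*b^2) ≤ 4/(a+b)^2 * (1/a^2 + 1/b^2) := by
    rw [div_add_div _ _ (by positivity) (by positivity), div_mul_div_comm,
      div_le_div_iff₀ (by positivity) (by positivity)]
    nlinarith [sq_nonneg (a-b), sq_nonneg (a*b), mul_pos (mul_pos ha0 ha0) (mul_pos hb0 hb0)]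
  linarith

theorem stmt_9 :
    ∃ c > (0:ℝ),
      ∀ n : ℕ,
        (coeff n) (derivativeFun (PowerSeries.mk (fun m : ℕ => c / (m + 1) ^ 3)) *
            derivativeFun (PowerSeries.mk (fun m : ℕ => c / (m + 1) ^ 3)))
          ≤ (coeff n) (derivativeFun (PowerSeries.mk (fun m : ℕ => c / (m + 1) ^ 3))) := by
  refine ⟨1/16, by norm_num, fun n => ?_⟩
  set c : ℝ := 1/16 with hc
  have hcoeff : ∀ k : ℕ, (coeff k) (derivativeFun (PowerSeries.mk (fun m : ℕ => c / (m + 1) ^ 3)))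
      = c * (k+1) / (k+2)^3 := by
    intro k
    change (coeff k) (derivative ℝ _) = _
    rw [coeff_derivative, coeff_mk]
    push_cast
    ring
  rw [coeff_mul]
  simp only [hcoeff]
  have step1 : ∑ p ∈ Finset.HasAntidiagonal.antidiagonal n, (c * (p.1+1) / (p.1+2)^3) * (c * (p.2+1) / (p.2+2)^3)
      ≤ ∑ p ∈ Finset.HasAntidiagonal.antidiagonal n, c^2 * (4/((n:ℝ)+4)^2 * (1/((p.1:ℝ)+2)^2 + 1/((p.2:ℝ)+2)^2)) := by
    apply Finset.sum_le_sum
    intro p hp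
    have hpn : p.1 + p.2 = n := Finset.HasAntidiagonal.mem_antidiagonal.mp hp
    have h1 : (1:ℝ) ≤ (p.1:ℝ)+2 := by linarith [Nat.cast_nonneg (α := ℝ) p.1]
    have h2 : (1:ℝ) ≤ (p.2:ℝ)+2 := by linarith [Nat.cast_nonneg (α := ℝ) p.2]
    have hb := pair_bound ((p.1:ℝ)+2) ((p.2:ℝ)+2) h1 h2
    have hsum : ((p.1:ℝ)+2) + ((p.2:ℝ)+2) = (n:ℝ)+4 := by
      have := congrArg (Nat.cast : ℕ → ℝ) hpn
      push_cast at this ⊢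
      linarith
    rw [hsum] at hb
    have hc2 : (0:ℝ) ≤ c^2 := by positivity
    calc (c * (p.1+1) / (p.1+2)^3) * (c * (p.2+1) / (p.2+2)^3)
        = c^2 * (((((p.1:ℝ)+2)-1)/((p.1:ℝ)+2)^3)*((((p.2:ℝ)+2)-1)/((p.2:ℝ)+2)^3)) := by ring
      _ ≤ c^2 * (4/((n:ℝ)+4)^2 * (1/((p.1:ℝ)+2)^2 + 1/((p.2:ℝ)+2)^2)) :=
          mul_le_mul_of_nonneg_left hb hc2
  have step2 : ∑ p ∈ Finset.HasAntidiagonal.antidiagonal n, c^2 * (4/((n:ℝ)+4)^2 * (1/((p.1:ℝ)+2)^2 + 1/((p.2:ℝ)+2)^2))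
      ≤ c^2 * (4/((n:ℝ)+4)^2) * 2 := by
    rw [← Finset.mul_sum]
    have heq : ∑ p ∈ Finset.HasAntidiagonal.antidiagonal n, (4/((n:ℝ)+4)^2 * (1/((p.1:ℝ)+2)^2 + 1/((p.2:ℝ)+2)^2))
        = 4/((n:ℝ)+4)^2 * ∑ p ∈ Finset.HasAntidiagonal.antidiagonal n, (1/((p.1:ℝ)+2)^2 + 1/((p.2:ℝ)+2)^2) := by
      rw [Finset.mul_sum]
    rw [heq, ← mul_assoc]
    apply mul_le_mul_of_nonneg_left _ (by positivity)
    rw [Finset.Nat.sum_antidiagonal_eq_sum_range_succ_mk]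
    have hsplit : ∑ i ∈ Finset.range (n+1), ((1:ℝ)/((i:ℝ)+2)^2 + 1/(((n-i : ℕ):ℝ)+2)^2)
        = ∑ i ∈ Finset.range (n+1), (1:ℝ)/((i:ℝ)+2)^2
          + ∑ i ∈ Finset.range (n+1), (1:ℝ)/(((n-i : ℕ):ℝ)+2)^2 := Finset.sum_add_distrib
    rw [hsplit]
    have hrefl : ∑ i ∈ Finset.range (n+1), (1:ℝ)/(((n-i : ℕ):ℝ)+2)^2
        = ∑ i ∈ Finset.range (n+1), (1:ℝ)/((i:ℝ)+2)^2 := by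
      rw [← Finset.sum_range_reflect]
      apply Finset.sum_congr rfl
      intro i hi
      rw [Finset.mem_range] at hi
      congr 3
      have h : n + 1 - 1 - i = n - i := by omega
      rw [h]
      have h2 : n - (n - i) = i := by omega
      rw [h2]
    rw [hrefl]
    have h1 := sum_inv_sq_le (n+1)
    have hpos : (0:ℝ) < 1/(((n:ℕ):ℝ)+1+1) := by positivity
    push_cast at h1
    linarith
  have step3 : c^2 * (4/((n:ℝ)+4)^2) * 2 ≤ c * (n+1) / (n+2)^3 := by
    have he : c^2 * (4/((n:ℝ)+4)^2) * 2 = (1/32)/((n:ℝ)+4)^2 := by rw [hc]; ring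
    rw [he, div_le_div_iff₀ (by positivity) (by positivity), hc]
    have hn : (0:ℝ) ≤ (n:ℝ) := Nat.cast_nonneg n
    nlinarith [sq_nonneg ((n:ℝ)), mul_nonneg hn hn, mul_nonneg (mul_nonneg hn hn) hn]
  calc _ ≤ _ := step1
    _ ≤ _ := step2
    _ ≤ _ := step3
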